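/- arXiv:2303.05119 — 5 statements merged into one kernel-verified Lean document; each statement's English description precedes it below -/
import Mathlib

section
/- Let π ∈ Π(1/n·𝟏, 1/n·𝟏) and U ∈ St(d,k). Then the weighted reconstruction cost satisfies the exact identity Σ_{i,j=1}^{n} ‖x_i − UUᵀx_j‖² π_{ij} = (1/n) Σ_{i=1}^{n} ‖x_i‖² − tr(Uᵀ M U), where M = X (2·sym(π) − (1/n) I_n) Xᵀ. Consequently, minimizing Σ_{i,j} ‖x_i − UUᵀx_j‖² π_{ij} over U ∈ St(d,k) is equivalent to maximizing tr(Uᵀ M U) over U ∈ St(d,k). -/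
open Matrix BigOperators Finset


private theorem stmt0_key (d n k : ℕ)
    (X : Matrix (Fin d) (Fin n) ℝ) (Pl : Matrix (Fin n) (Fin n) ℝ)
    (hPl_row : ∀ i, ∑ j, Pl i j = 1 / (n : ℝ))
    (hPl_col : ∀ j, ∑ i, Pl i j = 1 / (n : ℝ))
    (U : Matrix (Fin d) (Fin k) ℝ) (hU : Uᵀ * U = 1)
    (M : Matrix (Fin d) (Fin d) ℝ)
    (hM : M = X * ((2 : ℝ) • ((1 / 2 : ℝ) • (Pl + Plᵀ)) - (1 / (n : ℝ)) • 1) * Xᵀ) :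
    ∑ i, ∑ j, (∑ r, (X r i - (U * Uᵀ * X) r j) ^ 2) * Pl i j
        = (1 / (n : ℝ)) * ∑ i, ∑ r, (X r i) ^ 2 - Matrix.trace (Uᵀ * M * U) := by
  set Y : Matrix (Fin d) (Fin n) ℝ := U * Uᵀ * X with hYdef
  set Q : Matrix (Fin n) (Fin n) ℝ := Xᵀ * Y with hQdef
  have hAsimp : ((2 : ℝ) • ((1 / 2 : ℝ) • (Pl + Plᵀ)) - (1 / (n : ℝ)) • 1)
      = Pl + Plᵀ - (1 / (n : ℝ)) • 1 := by
    rw [smul_smul]; norm_num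
  have hQsym : ∀ i j, Q i j = Q j i := by
    intro i j
    have h : Qᵀ = Q := by
      rw [hQdef, hYdef]
      simp [Matrix.transpose_mul, Matrix.mul_assoc]
    exact (congrFun (congrFun h j) i).symm ▸ rfl
  have hYY : Yᵀ * Y = Q := by
    rw [hQdef, hYdef]
    have h2 : (U * Uᵀ * X)ᵀ * (U * Uᵀ * X) = Xᵀ * (U * ((Uᵀ * U) * (Uᵀ * X))) := by
      simp only [Matrix.transpose_mul, Matrix.transpose_transpose, Matrix.mul_assoc]
    rw [h2, hU, Matrix.one_mul, Matrix.mul_assoc]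
  have hQapp : ∀ i j, Q i j = ∑ r, X r i * Y r j := by
    intro i j; rw [hQdef]; simp [Matrix.mul_apply, Matrix.transpose_apply]
  have hYnorm : ∀ j, ∑ r, (Y r j) ^ 2 = Q j j := by
    intro j
    have := congrFun (congrFun hYY j) j
    simpa [Matrix.mul_apply, Matrix.transpose_apply, sq] using this
  have hexp : ∀ i j, (∑ r, (X r i - Y r j) ^ 2)
      = (∑ r, (X r i) ^ 2) - 2 * Q i j + Q j j := by
    intro i j
    rw [hQapp, ← hYnorm j, Finset.mul_sum, ← Finset.sum_sub_distrib,
      ← Finset.sum_add_distrib]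
    exact Finset.sum_congr rfl fun r _ => by ring
  set S : ℝ := ∑ i, ∑ j, Q i j * Pl i j with hSdef
  have hswap : (∑ i, ∑ j, Q i j * Pl j i) = S := by
    rw [hSdef, Finset.sum_comm]
    exact Finset.sum_congr rfl fun x _ => Finset.sum_congr rfl fun y _ => by
      rw [hQsym y x]
  have htr : Matrix.trace (Uᵀ * M * U)
      = (∑ i, ∑ j, Q i j * (Pl j i + Pl i j)) - (1 / (n : ℝ)) * ∑ i, Q i i := by
    have h1 : Matrix.trace (Uᵀ * M * U)
        = Matrix.trace (Q * (Pl + Plᵀ - (1 / (n : ℝ)) • 1)) := by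
      rw [Matrix.trace_mul_cycle, hM, hAsimp,
        show U * Uᵀ * (X * (Pl + Plᵀ - (1 / (n : ℝ)) • 1) * Xᵀ)
          = (Y * (Pl + Plᵀ - (1 / (n : ℝ)) • 1)) * Xᵀ by
            rw [hYdef]; simp only [Matrix.mul_assoc],
        Matrix.trace_mul_comm, hQdef, Matrix.mul_assoc]
      congr 1
      rw [hYdef]
      simp only [Matrix.mul_assoc]
    rw [h1]
    simp only [Matrix.trace, Matrix.diag, Matrix.mul_apply, Matrix.sub_apply,
      Matrix.add_apply, Matrix.smul_apply, Matrix.transpose_apply, Matrix.one_apply,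
      smul_eq_mul, mul_ite, mul_one, mul_zero, mul_sub, mul_add]
    have e : ∀ x : Fin n, (∑ y, (Q x y * Pl y x + Q x y * Pl x y
          - if y = x then Q x y * (1 / (n : ℝ)) else 0))
        = (∑ y, Q x y * (Pl y x + Pl x y)) - (1 / (n : ℝ)) * Q x x := by
      intro x
      rw [Finset.sum_sub_distrib]
      congr 1
      · exact Finset.sum_congr rfl fun y _ => by ring
      · simp [mul_comm]
    rw [Finset.sum_congr rfl fun x _ => e x, Finset.sum_sub_distrib, Finset.mul_sum]
    congr 1
    exact Finset.sum_congr rfl fun x _ => Finset.sum_congr rfl fun y _ => mul_add _ _ _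
  have hL : ∑ i, ∑ j, (∑ r, (X r i - Y r j) ^ 2) * Pl i j
      = (1 / (n : ℝ)) * (∑ i, ∑ r, (X r i) ^ 2) - 2 * S
        + (1 / (n : ℝ)) * ∑ j, Q j j := by
    have step1 : ∀ i, ∑ j, (∑ r, (X r i - Y r j) ^ 2) * Pl i j
        = (∑ r, (X r i) ^ 2) * (1 / (n : ℝ)) - 2 * (∑ j, Q i j * Pl i j)
          + ∑ j, Q j j * Pl i j := by
      intro i
      rw [← hPl_row i, Finset.mul_sum, Finset.mul_sum, ← Finset.sum_sub_distrib,
        ← Finset.sum_add_distrib]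
      exact Finset.sum_congr rfl fun j _ => by rw [hexp]; ring
    rw [Finset.sum_congr rfl fun i _ => step1 i, Finset.sum_add_distrib,
      Finset.sum_sub_distrib]
    congr 1
    · congr 1
      · rw [Finset.mul_sum]; exact Finset.sum_congr rfl fun i _ => mul_comm _ _
      · rw [hSdef, Finset.mul_sum]
    · rw [Finset.sum_comm, Finset.mul_sum]
      exact Finset.sum_congr rfl fun j _ => by rw [← Finset.mul_sum, hPl_col j]; ring
  have h2S : (∑ i, ∑ j, Q i j * (Pl j i + Pl i j)) = 2 * S := by
    have e : ∀ i, (∑ j, Q i j * (Pl j i + Pl i j))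
        = (∑ j, Q i j * Pl j i) + ∑ j, Q i j * Pl i j := by
      intro i; rw [← Finset.sum_add_distrib]
      exact Finset.sum_congr rfl fun j _ => by ring
    rw [Finset.sum_congr rfl fun i _ => e i, Finset.sum_add_distrib, hswap, ← hSdef]
    ring
  rw [hL, htr, h2S]
  ring

/-- For a coupling `Pl ∈ Π(1/n·𝟏, 1/n·𝟏)` and `U ∈ St(d,k)`,
`Σ_{i,j} ‖x_i − UUᵀx_j‖² π_{ij} = (1/n) Σ_i ‖x_i‖² − tr(Uᵀ M U)` where
`M = X (2·sym(π) − (1/n) I) Xᵀ`; consequently minimizing the weighted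
reconstruction cost over the Stiefel manifold is equivalent to maximizing
`tr(Uᵀ M U)`. -/
theorem stmt0 (d n k : ℕ)
    (X : Matrix (Fin d) (Fin n) ℝ) (Pl : Matrix (Fin n) (Fin n) ℝ)
    (hPl_nonneg : ∀ i j, 0 ≤ Pl i j)
    (hPl_row : ∀ i, ∑ j, Pl i j = 1 / (n : ℝ))
    (hPl_col : ∀ j, ∑ i, Pl i j = 1 / (n : ℝ))
    (U : Matrix (Fin d) (Fin k) ℝ) (hU : Uᵀ * U = 1)
    (M : Matrix (Fin d) (Fin d) ℝ)
    (hM : M = X * ((2 : ℝ) • ((1 / 2 : ℝ) • (Pl + Plᵀ)) - (1 / (n : ℝ)) • 1) * Xᵀ) :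
    (∑ i, ∑ j, (∑ r, (X r i - (U * Uᵀ * X) r j) ^ 2) * Pl i j
        = (1 / (n : ℝ)) * ∑ i, ∑ r, (X r i) ^ 2 - Matrix.trace (Uᵀ * M * U))
    ∧ ∀ V W : Matrix (Fin d) (Fin k) ℝ, Vᵀ * V = 1 → Wᵀ * W = 1 →
        ((∑ i, ∑ j, (∑ r, (X r i - (V * Vᵀ * X) r j) ^ 2) * Pl i j
            ≤ ∑ i, ∑ j, (∑ r, (X r i - (W * Wᵀ * X) r j) ^ 2) * Pl i j)
          ↔ Matrix.trace (Wᵀ * M * W) ≤ Matrix.trace (Vᵀ * M * V)) := by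
  refine ⟨stmt0_key d n k X Pl hPl_row hPl_col U hU M hM, ?_⟩
  intro V W hV hW
  rw [stmt0_key d n k X Pl hPl_row hPl_col V hV M hM,
    stmt0_key d n k X Pl hPl_row hPl_col W hW M hM]
  constructor <;> intro h <;> linarith
end

section
/- Let π ∈ Π(1/n·𝟏, 1/n·𝟏), let Σ = (1/n) X Xᵀ, let λ_max^Σ be the largest eigenvalue of Σ, let λ_min^{sym(π)} be the smallest eigenvalue of sym(π), let α = 1 − 2n·λ_min^{sym(π)}, and define P = α (Σ − 1_{α>0} λ_max^Σ I_d) − 2 X (sym(π) − λ_min^{sym(π)} I_n) Xᵀ. Then for every U ∈ St(d,k), Σ_{i,j=1}^{n} ‖x_i − UUᵀx_j‖² π_{ij} = tr(Uᵀ P U) + (1/n) Σ_{i=1}^{n} ‖x_i‖² + 1_{α>0}·α·k·λ_max^Σ; in particular, minimizing the weighted reconstruction cost over St(d,k) is equivalent to minimizing tr(Uᵀ P U) over St(d,k). -/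
open Matrix BigOperators Finset

/-- with `Σ = (1/n) X Xᵀ`, `λmax` the largest eigenvalue of `Σ`,
`λmin` the smallest eigenvalue of `sym(π)`, `α = 1 − 2n·λmin` and
`P = α (Σ − 1_{α>0} λmax I) − 2 X (sym(π) − λmin I) Xᵀ`, for every `U ∈ St(d,k)`
the weighted reconstruction cost equals
`tr(Uᵀ P U) + (1/n) Σ_i ‖x_i‖² + 1_{α>0}·α·k·λmax`; in particular minimizing
the cost over `St(d,k)` is equivalent to minimizing `tr(Uᵀ P U)` there. -/
theorem stmt4 (d n k : ℕ)
    (X : Matrix (Fin d) (Fin n) ℝ) (Pl : Matrix (Fin n) (Fin n) ℝ)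
    (hPl_nonneg : ∀ i j, 0 ≤ Pl i j)
    (hPl_row : ∀ i, ∑ j, Pl i j = 1 / (n : ℝ))
    (hPl_col : ∀ j, ∑ i, Pl i j = 1 / (n : ℝ))
    (Sig : Matrix (Fin d) (Fin d) ℝ) (hSig : Sig = (1 / (n : ℝ)) • (X * Xᵀ))
    (symPl : Matrix (Fin n) (Fin n) ℝ) (hsymPl : symPl = (1 / 2 : ℝ) • (Pl + Plᵀ))
    (lmax : ℝ)
    (hlmax_ev : ∃ v : Fin d → ℝ, v ≠ 0 ∧ Sig *ᵥ v = lmax • v)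
    (hlmax_max : ∀ (μ : ℝ) (v : Fin d → ℝ), v ≠ 0 → Sig *ᵥ v = μ • v → μ ≤ lmax)
    (lmin : ℝ)
    (hlmin_ev : ∃ v : Fin n → ℝ, v ≠ 0 ∧ symPl *ᵥ v = lmin • v)
    (hlmin_min : ∀ (μ : ℝ) (v : Fin n → ℝ), v ≠ 0 → symPl *ᵥ v = μ • v → lmin ≤ μ)
    (α : ℝ) (hα : α = 1 - 2 * (n : ℝ) * lmin)
    (P : Matrix (Fin d) (Fin d) ℝ)
    (hP : P = α • (Sig - (if 0 < α then lmax else 0) • (1 : Matrix (Fin d) (Fin d) ℝ))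
            - (2 : ℝ) • (X * (symPl - lmin • (1 : Matrix (Fin n) (Fin n) ℝ)) * Xᵀ)) :
    (∀ U : Matrix (Fin d) (Fin k) ℝ, Uᵀ * U = 1 →
        ∑ i, ∑ j, (∑ r, (X r i - (U * Uᵀ * X) r j) ^ 2) * Pl i j
          = Matrix.trace (Uᵀ * P * U) + (1 / (n : ℝ)) * ∑ i, ∑ r, (X r i) ^ 2
            + (if 0 < α then (1 : ℝ) else 0) * α * (k : ℝ) * lmax)
    ∧ ∀ U V : Matrix (Fin d) (Fin k) ℝ, Uᵀ * U = 1 → Vᵀ * V = 1 →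
        ((∑ i, ∑ j, (∑ r, (X r i - (U * Uᵀ * X) r j) ^ 2) * Pl i j
            ≤ ∑ i, ∑ j, (∑ r, (X r i - (V * Vᵀ * X) r j) ^ 2) * Pl i j)
          ↔ Matrix.trace (Uᵀ * P * U) ≤ Matrix.trace (Vᵀ * P * V)) := by
  classical
  have hn : 0 < n := by
    rcases hlmin_ev with ⟨v, hv, -⟩
    rcases Nat.eq_zero_or_pos n with h | h
    · subst h; exact absurd (funext fun i => i.elim0) hv
    · exact h
  have hnR : (n : ℝ) ≠ 0 := Nat.cast_ne_zero.mpr hn.ne'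
  set β : ℝ := if 0 < α then lmax else 0 with hβ
  have key : ∀ U : Matrix (Fin d) (Fin k) ℝ, Uᵀ * U = 1 →
      ∑ i, ∑ j, (∑ r, (X r i - (U * Uᵀ * X) r j) ^ 2) * Pl i j
        = Matrix.trace (Uᵀ * P * U) + (1 / (n : ℝ)) * ∑ i, ∑ r, (X r i) ^ 2
          + (if 0 < α then (1 : ℝ) else 0) * α * (k : ℝ) * lmax := by
    intro U hU
    set M : Matrix (Fin n) (Fin n) ℝ := Xᵀ * U * Uᵀ * X with hM
    have hMsym : ∀ i j, M j i = M i j := by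
      intro i j
      have h : Mᵀ = M := by
        rw [hM]; simp [Matrix.transpose_mul, Matrix.mul_assoc]
      calc M j i = Mᵀ i j := rfl
        _ = M i j := by rw [h]
    have hUZ : ∀ Z : Matrix (Fin k) (Fin n) ℝ, Uᵀ * (U * Z) = Z := by
      intro Z; rw [← Matrix.mul_assoc, hU, Matrix.one_mul]
    have hC : ∀ i j, (∑ r, X r i * (U * Uᵀ * X) r j) = M i j := by
      intro i j
      have h2 : M = Xᵀ * (U * Uᵀ * X) := by rw [hM]; simp [Matrix.mul_assoc]
      rw [h2, Matrix.mul_apply]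
      simp [Matrix.transpose_apply]
    have hQ : ∀ j, (∑ r, ((U * Uᵀ * X) r j) ^ 2) = M j j := by
      intro j
      have h1 : (U * Uᵀ * X)ᵀ * (U * Uᵀ * X) = M := by
        rw [hM]; simp [Matrix.transpose_mul, Matrix.mul_assoc, hUZ]
      calc (∑ r, ((U * Uᵀ * X) r j) ^ 2)
          = ∑ r, (U * Uᵀ * X)ᵀ j r * (U * Uᵀ * X) r j := by
            simp [Matrix.transpose_apply, pow_two]
        _ = ((U * Uᵀ * X)ᵀ * (U * Uᵀ * X)) j j := (Matrix.mul_apply).symm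
        _ = M j j := by rw [h1]
    have hexp : ∀ i j, (∑ r, (X r i - (U * Uᵀ * X) r j) ^ 2)
        = (∑ r, (X r i) ^ 2) - 2 * M i j + M j j := by
      intro i j
      have e : ∀ r : Fin d, (X r i - (U * Uᵀ * X) r j) ^ 2
          = (X r i) ^ 2 - X r i * (U * Uᵀ * X) r j * 2 + ((U * Uᵀ * X) r j) ^ 2 :=
        fun r => by ring
      rw [Finset.sum_congr rfl fun r _ => e r, Finset.sum_add_distrib,
        Finset.sum_sub_distrib, ← Finset.sum_mul, hC, hQ]
      ring
    set W : ℝ := ∑ i, ∑ j, M i j * Pl i j with hW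
    have hLHS : (∑ i, ∑ j, (∑ r, (X r i - (U * Uᵀ * X) r j) ^ 2) * Pl i j)
        = (1 / (n : ℝ)) * (∑ i, ∑ r, (X r i) ^ 2) - 2 * W
          + (1 / (n : ℝ)) * Matrix.trace M := by
      have hA : ∑ i, ∑ j, (∑ r, (X r i) ^ 2) * Pl i j
          = (1 / (n : ℝ)) * (∑ i, ∑ r, (X r i) ^ 2) := by
        rw [Finset.sum_congr rfl fun i _ => by
          rw [← Finset.mul_sum, hPl_row i], ← Finset.sum_mul]
        ring
      have hCc : ∑ i, ∑ j, M j j * Pl i j = (1 / (n : ℝ)) * Matrix.trace M := by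
        rw [Finset.sum_comm]
        rw [Finset.sum_congr rfl fun j _ => by
          rw [← Finset.mul_sum, hPl_col j], ← Finset.sum_mul, Matrix.trace]
        simp [Matrix.diag]
        ring
      calc (∑ i, ∑ j, (∑ r, (X r i - (U * Uᵀ * X) r j) ^ 2) * Pl i j)
          = ∑ i, ∑ j, ((∑ r, (X r i) ^ 2) * Pl i j - 2 * (M i j * Pl i j)
              + M j j * Pl i j) := by
            refine Finset.sum_congr rfl fun i _ => Finset.sum_congr rfl fun j _ => ?_
            rw [hexp i j]; ring
        _ = (∑ i, ∑ j, (∑ r, (X r i) ^ 2) * Pl i j)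
              - 2 * (∑ i, ∑ j, M i j * Pl i j)
              + ∑ i, ∑ j, M j j * Pl i j := by
            simp [Finset.sum_add_distrib, Finset.sum_sub_distrib, Finset.mul_sum]
        _ = (1 / (n : ℝ)) * (∑ i, ∑ r, (X r i) ^ 2) - 2 * W
              + (1 / (n : ℝ)) * Matrix.trace M := by rw [hA, hCc, hW]
    have hWsym : Matrix.trace (symPl * M) = W := by
      have e2 : ∑ i, ∑ j, Pl j i * M i j = W := by
        rw [Finset.sum_comm, hW]
        exact Finset.sum_congr rfl fun a _ => Finset.sum_congr rfl fun b _ => by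
          rw [hMsym a b, mul_comm]
      rw [Matrix.trace]
      simp only [Matrix.diag, Matrix.mul_apply, hsymPl, Matrix.smul_apply,
        Matrix.add_apply, Matrix.transpose_apply, smul_eq_mul]
      have e1 : ∀ i j : Fin n, (1 / 2 : ℝ) * (Pl i j + Pl j i) * M j i
          = (1 / 2 : ℝ) * (M i j * Pl i j) + (1 / 2 : ℝ) * (Pl j i * M i j) := by
        intro i j; rw [hMsym i j]; ring
      calc ∑ i, ∑ j, (1 / 2 : ℝ) * (Pl i j + Pl j i) * M j i
          = ∑ i, ∑ j, ((1 / 2 : ℝ) * (M i j * Pl i j)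
              + (1 / 2 : ℝ) * (Pl j i * M i j)) := by
            exact Finset.sum_congr rfl fun i _ => Finset.sum_congr rfl fun j _ => e1 i j
        _ = (1 / 2 : ℝ) * (∑ i, ∑ j, M i j * Pl i j)
              + (1 / 2 : ℝ) * (∑ i, ∑ j, Pl j i * M i j) := by
            simp [Finset.sum_add_distrib, Finset.mul_sum]
        _ = W := by rw [e2, ← hW]; ring
    have tr1 : Matrix.trace (Uᵀ * (X * Xᵀ) * U) = Matrix.trace M := by
      have h1 : Uᵀ * (X * Xᵀ) * U = (Uᵀ * X) * (Xᵀ * U) := by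
        simp [Matrix.mul_assoc]
      rw [h1, Matrix.trace_mul_comm, hM]
      simp [Matrix.mul_assoc]
    have tr2 : Matrix.trace (Uᵀ * (X * symPl * Xᵀ) * U)
        = Matrix.trace (symPl * M) := by
      have h1 : Uᵀ * (X * symPl * Xᵀ) * U = (Uᵀ * X) * (symPl * Xᵀ * U) := by
        simp [Matrix.mul_assoc]
      rw [h1, Matrix.trace_mul_comm, hM]
      simp [Matrix.mul_assoc]
    have tr3 : Matrix.trace (Uᵀ * (1 : Matrix (Fin d) (Fin d) ℝ) * U) = (k : ℝ) := by
      rw [Matrix.mul_one, hU, Matrix.trace_one]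
      simp
    have hmid : X * (symPl - lmin • (1 : Matrix (Fin n) (Fin n) ℝ)) * Xᵀ
        = X * symPl * Xᵀ - lmin • (X * Xᵀ) := by
      rw [Matrix.mul_sub, Matrix.sub_mul, Matrix.mul_smul, Matrix.mul_one,
        Matrix.smul_mul]
    have hPexp : P = (α * (1 / (n : ℝ))) • (X * Xᵀ)
        - (α * β) • (1 : Matrix (Fin d) (Fin d) ℝ)
        - (2 : ℝ) • (X * symPl * Xᵀ) + (2 * lmin) • (X * Xᵀ) := by
      rw [hP, hmid, hSig]
      module
    have htr : Matrix.trace (Uᵀ * P * U)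
        = α * (1 / (n : ℝ)) * Matrix.trace M - α * β * k - 2 * W
          + 2 * lmin * Matrix.trace M := by
      have e : Uᵀ * P * U = (α * (1 / (n : ℝ))) • (Uᵀ * (X * Xᵀ) * U)
          - (α * β) • (Uᵀ * (1 : Matrix (Fin d) (Fin d) ℝ) * U)
          - (2 : ℝ) • (Uᵀ * (X * symPl * Xᵀ) * U)
          + (2 * lmin) • (Uᵀ * (X * Xᵀ) * U) := by
        rw [hPexp]
        simp only [Matrix.mul_sub, Matrix.mul_add, Matrix.sub_mul, Matrix.add_mul,
          Matrix.mul_smul, Matrix.smul_mul]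
      rw [e]
      simp only [Matrix.trace_sub, Matrix.trace_add, Matrix.trace_smul, smul_eq_mul]
      rw [tr1, tr2, hWsym, tr3]
    have hind : (if 0 < α then (1 : ℝ) else 0) * α * (k : ℝ) * lmax
        = α * β * k := by
      by_cases h : 0 < α
      · simp [hβ, h]
        ring
      · simp [hβ, h]
    have hαn : α * (1 / (n : ℝ)) = 1 / (n : ℝ) - 2 * lmin := by
      rw [hα]; field_simp
    rw [hLHS, htr, hind]
    linear_combination (-Matrix.trace M) * hαn
  refine ⟨key, ?_⟩
  intro U V hU hV
  rw [key U hU, key V hV]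
  constructor <;> intro h <;> linarith
end

section
/- Let π ∈ Π(1/n·𝟏, 1/n·𝟏), Σ = (1/n) X Xᵀ, λ_max^Σ the largest eigenvalue of Σ, λ_min^{sym(π)} the smallest eigenvalue of sym(π), α = 1 − 2n·λ_min^{sym(π)}, and P = α (Σ − 1_{α>0} λ_max^Σ I_d) − 2 X (sym(π) − λ_min^{sym(π)} I_n) Xᵀ. Then P is negative semidefinite: for all v ∈ ℝ^d, vᵀ P v ≤ 0. -/
open Matrix BigOperators Finset

lemma aux_isHerm_smul {m : ℕ} (c : ℝ) {A : Matrix (Fin m) (Fin m) ℝ} (hA : A.IsHermitian) :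
    (c • A).IsHermitian := by
  have h2 : (c • A)ᴴ = c • Aᴴ := by
    ext i j
    simp [conjTranspose_apply]
  unfold Matrix.IsHermitian at *
  rw [h2, hA]

lemma aux_psd_of_eig_le {m : ℕ} {A : Matrix (Fin m) (Fin m) ℝ} (hA : A.IsHermitian) {c : ℝ}
    (h : ∀ (μ : ℝ) (w : Fin m → ℝ), w ≠ 0 → A *ᵥ w = μ • w → μ ≤ c) :
    (c • (1 : Matrix (Fin m) (Fin m) ℝ) - A).PosSemidef := by
  have hB : (c • (1 : Matrix (Fin m) (Fin m) ℝ) - A).IsHermitian := by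
    exact (aux_isHerm_smul c isHermitian_one).sub hA
  apply hB.posSemidef_iff_eigenvalues_nonneg.mpr
  intro i
  set μ := hB.eigenvalues i with hμ
  have hw : (⇑(hB.eigenvectorBasis i) : Fin m → ℝ) ≠ 0 :=
    fun h0 => hB.eigenvectorBasis.orthonormal.ne_zero i (by simpa using congrArg (WithLp.toLp 2) h0)
  have hev := hB.mulVec_eigenvectorBasis i
  have hAw : A *ᵥ ⇑(hB.eigenvectorBasis i) = (c - μ) • ⇑(hB.eigenvectorBasis i) := by
    have h1 : (c • (1 : Matrix (Fin m) (Fin m) ℝ) - A) *ᵥ ⇑(hB.eigenvectorBasis i)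
        = c • ⇑(hB.eigenvectorBasis i) - A *ᵥ ⇑(hB.eigenvectorBasis i) := by
      rw [sub_mulVec, smul_mulVec, one_mulVec]
    rw [h1] at hev
    have : A *ᵥ ⇑(hB.eigenvectorBasis i) = c • ⇑(hB.eigenvectorBasis i) - μ • ⇑(hB.eigenvectorBasis i) := by
      rw [← hev]; abel
    rw [this, ← sub_smul]
  have := h (c - μ) _ hw hAw
  change (0 : ℝ) ≤ μ
  linarith

lemma aux_psd_of_le_eig {m : ℕ} {A : Matrix (Fin m) (Fin m) ℝ} (hA : A.IsHermitian) {c : ℝ}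
    (h : ∀ (μ : ℝ) (w : Fin m → ℝ), w ≠ 0 → A *ᵥ w = μ • w → c ≤ μ) :
    (A - c • (1 : Matrix (Fin m) (Fin m) ℝ)).PosSemidef := by
  have hnA : (-A).IsHermitian := hA.neg
  have h' : ∀ (μ : ℝ) (w : Fin m → ℝ), w ≠ 0 → (-A) *ᵥ w = μ • w → μ ≤ -c := by
    intro μ w hw hMw
    have : A *ᵥ w = (-μ) • w := by
      rw [neg_mulVec] at hMw
      rw [← neg_neg (A *ᵥ w), hMw, neg_smul]
    have := h (-μ) w hw this
    linarith
  have := aux_psd_of_eig_le hnA h'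
  have heq : (-c) • (1 : Matrix (Fin m) (Fin m) ℝ) - (-A) = A - c • 1 := by
    rw [neg_smul]; abel
  rwa [heq] at this

/-- with `Σ = (1/n) X Xᵀ`, `λmax` the largest eigenvalue of `Σ`,
`λmin` the smallest eigenvalue of `sym(π)`, `α = 1 − 2n·λmin` and
`P = α (Σ − 1_{α>0} λmax I) − 2 X (sym(π) − λmin I) Xᵀ`, the matrix `P` is
negative semidefinite: `vᵀ P v ≤ 0` for all `v ∈ ℝ^d`. -/
theorem stmt5 (d n : ℕ)
    (X : Matrix (Fin d) (Fin n) ℝ) (Pl : Matrix (Fin n) (Fin n) ℝ)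
    (hPl_nonneg : ∀ i j, 0 ≤ Pl i j)
    (hPl_row : ∀ i, ∑ j, Pl i j = 1 / (n : ℝ))
    (hPl_col : ∀ j, ∑ i, Pl i j = 1 / (n : ℝ))
    (Sig : Matrix (Fin d) (Fin d) ℝ) (hSig : Sig = (1 / (n : ℝ)) • (X * Xᵀ))
    (symPl : Matrix (Fin n) (Fin n) ℝ) (hsymPl : symPl = (1 / 2 : ℝ) • (Pl + Plᵀ))
    (lmax : ℝ)
    (hlmax_ev : ∃ v : Fin d → ℝ, v ≠ 0 ∧ Sig *ᵥ v = lmax • v)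
    (hlmax_max : ∀ (μ : ℝ) (v : Fin d → ℝ), v ≠ 0 → Sig *ᵥ v = μ • v → μ ≤ lmax)
    (lmin : ℝ)
    (hlmin_ev : ∃ v : Fin n → ℝ, v ≠ 0 ∧ symPl *ᵥ v = lmin • v)
    (hlmin_min : ∀ (μ : ℝ) (v : Fin n → ℝ), v ≠ 0 → symPl *ᵥ v = μ • v → lmin ≤ μ)
    (α : ℝ) (hα : α = 1 - 2 * (n : ℝ) * lmin)
    (P : Matrix (Fin d) (Fin d) ℝ)
    (hP : P = α • (Sig - (if 0 < α then lmax else 0) • (1 : Matrix (Fin d) (Fin d) ℝ))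
            - (2 : ℝ) • (X * (symPl - lmin • (1 : Matrix (Fin n) (Fin n) ℝ)) * Xᵀ)) :
    ∀ v : Fin d → ℝ, v ⬝ᵥ (P *ᵥ v) ≤ 0 := by
  intro v
  -- symPl is Hermitian
  have hsymH : symPl.IsHermitian := by
    rw [hsymPl]
    unfold Matrix.IsHermitian
    rw [conjTranspose_eq_transpose_of_trivial, transpose_smul, transpose_add,
      transpose_transpose, add_comm]
  -- symPl - lmin • 1 is PSD
  have hS : (symPl - lmin • (1 : Matrix (Fin n) (Fin n) ℝ)).PosSemidef :=
    aux_psd_of_le_eig hsymH hlmin_min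
  -- X * S * Xᵀ is PSD
  have hM : (X * (symPl - lmin • (1 : Matrix (Fin n) (Fin n) ℝ)) * Xᵀ).PosSemidef := by
    have := hS.mul_mul_conjTranspose_same X
    rwa [conjTranspose_eq_transpose_of_trivial] at this
  have hMv : 0 ≤ v ⬝ᵥ ((X * (symPl - lmin • (1 : Matrix (Fin n) (Fin n) ℝ)) * Xᵀ) *ᵥ v) := by
    simpa using hM.dotProduct_mulVec_nonneg v
  -- Sig is Hermitian
  have hXXT : (X * Xᵀ).PosSemidef := by
    have := posSemidef_self_mul_conjTranspose X
    rwa [conjTranspose_eq_transpose_of_trivial] at this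
  have hSigH : Sig.IsHermitian := by
    rw [hSig]
    exact aux_isHerm_smul _ hXXT.isHermitian
  rw [hP, sub_mulVec, dotProduct_sub, smul_mulVec, smul_mulVec,
    dotProduct_smul, dotProduct_smul, smul_eq_mul, smul_eq_mul]
  by_cases hpos : 0 < α
  · simp only [if_pos hpos]
    have hmax : (lmax • (1 : Matrix (Fin d) (Fin d) ℝ) - Sig).PosSemidef :=
      aux_psd_of_eig_le hSigH hlmax_max
    have h1 : 0 ≤ v ⬝ᵥ ((lmax • (1 : Matrix (Fin d) (Fin d) ℝ) - Sig) *ᵥ v) := by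
      simpa using hmax.dotProduct_mulVec_nonneg v
    have h2 : v ⬝ᵥ ((Sig - lmax • (1 : Matrix (Fin d) (Fin d) ℝ)) *ᵥ v) ≤ 0 := by
      have : (Sig - lmax • (1 : Matrix (Fin d) (Fin d) ℝ)) = -(lmax • 1 - Sig) := by abel
      rw [this, neg_mulVec, dotProduct_neg]
      linarith
    nlinarith
  · simp only [if_neg hpos, zero_smul, sub_zero]
    have hα0 : α ≤ 0 := le_of_not_gt hpos
    have hSigPSD : Sig.PosSemidef := by
      rw [hSig]
      refine .of_dotProduct_mulVec_nonneg (aux_isHerm_smul _ hXXT.isHermitian) fun x => ?_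
      rw [smul_mulVec, dotProduct_smul, smul_eq_mul]
      have := hXXT.dotProduct_mulVec_nonneg x
      positivity
    have h3 : 0 ≤ v ⬝ᵥ (Sig *ᵥ v) := by simpa using hSigPSD.dotProduct_mulVec_nonneg v
    nlinarith
end

section
/- Let U ∈ St(d,k). Then for every coupling π ∈ Π(1/n·𝟏, 1/n·𝟏), Σ_{i,j=1}^{n} ‖x_i − UUᵀx_j‖² π_{ij} ≥ (1/n) Σ_{i=1}^{n} ‖x_i − UUᵀx_i‖²; i.e., the rescaled identity coupling π = (1/n) I_n minimizes the transport cost Σ_{i,j} ‖x_i − UUᵀx_j‖² π_{ij} over Π(1/n·𝟏, 1/n·𝟏). Consequently, the unregularized optimal transport formulation reduces to the standard PCA reconstruction objective. -/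
open Matrix BigOperators Finset

lemma key_aux {d n k : ℕ}
    (X : Matrix (Fin d) (Fin n) ℝ)
    (U : Matrix (Fin d) (Fin k) ℝ) (hU : Uᵀ * U = 1) (i j : Fin n) :
    ∑ r, (X r i - (U * Uᵀ * X) r i) ^ 2 ≤ ∑ r, (X r i - (U * Uᵀ * X) r j) ^ 2 := by
  set M := U * Uᵀ * X with hM
  have hMM : Mᵀ * M = Xᵀ * M := by
    have : Mᵀ = Xᵀ * (U * Uᵀ) := by
      rw [hM, Matrix.transpose_mul, Matrix.transpose_mul, Matrix.transpose_transpose]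
    rw [this, hM]
    rw [show Xᵀ * (U * Uᵀ) * (U * Uᵀ * X) = Xᵀ * (U * (Uᵀ * U) * (Uᵀ * X)) by
      simp only [Matrix.mul_assoc], hU]
    simp [Matrix.mul_assoc]
  -- cross term zero: ∑ r, (X r i - M r i) * (M r i - M r j) = 0
  have hcross : ∑ r, (X r i - M r i) * (M r i - M r j) = 0 := by
    have h1 : ∀ a b : Fin n, ∑ r, X r a * M r b = ∑ r, M r a * M r b := by
      intro a b
      have := congrFun (congrFun hMM.symm a) b
      simpa [Matrix.mul_apply, Matrix.transpose_apply, mul_comm] using this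
    have e1 := h1 i i
    have e2 := h1 i j
    have : ∑ r, (X r i - M r i) * (M r i - M r j)
        = (∑ r, X r i * M r i) - (∑ r, X r i * M r j)
          - (∑ r, M r i * M r i) + (∑ r, M r i * M r j) := by
      rw [← Finset.sum_sub_distrib, ← Finset.sum_sub_distrib, ← Finset.sum_add_distrib]
      apply Finset.sum_congr rfl
      intro r _; ring
    rw [this, e1, e2]; ring
  have expand : ∑ r, (X r i - M r j) ^ 2
      = (∑ r, (X r i - M r i) ^ 2) + 2 * (∑ r, (X r i - M r i) * (M r i - M r j))
        + ∑ r, (M r i - M r j) ^ 2 := by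
    rw [Finset.mul_sum, ← Finset.sum_add_distrib, ← Finset.sum_add_distrib]
    apply Finset.sum_congr rfl
    intro r _; ring
  rw [expand, hcross]
  have : 0 ≤ ∑ r, (M r i - M r j) ^ 2 := Finset.sum_nonneg fun r _ => sq_nonneg _
  linarith

/-- for `U ∈ St(d,k)` and every coupling `π ∈ Π(1/n·𝟏, 1/n·𝟏)`,
`Σ_{i,j} ‖x_i − UUᵀx_j‖² π_{ij} ≥ (1/n) Σ_i ‖x_i − UUᵀx_i‖²`; the rescaled
identity coupling `(1/n) I` belongs to `Π(1/n·𝟏, 1/n·𝟏)` and attains this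
lower bound, so it minimizes the transport cost. -/
theorem stmt12 (d n k : ℕ)
    (X : Matrix (Fin d) (Fin n) ℝ)
    (U : Matrix (Fin d) (Fin k) ℝ) (hU : Uᵀ * U = 1) :
    (∀ Pl : Matrix (Fin n) (Fin n) ℝ,
        (∀ i j, 0 ≤ Pl i j) →
        (∀ i, ∑ j, Pl i j = 1 / (n : ℝ)) →
        (∀ j, ∑ i, Pl i j = 1 / (n : ℝ)) →
        ∑ i, ∑ j, (∑ r, (X r i - (U * Uᵀ * X) r j) ^ 2) * Pl i j
          ≥ (1 / (n : ℝ)) * ∑ i, ∑ r, (X r i - (U * Uᵀ * X) r i) ^ 2)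
    ∧ (∀ i j, (0 : ℝ) ≤ ((1 / (n : ℝ)) • (1 : Matrix (Fin n) (Fin n) ℝ)) i j)
    ∧ (∀ i, ∑ j, ((1 / (n : ℝ)) • (1 : Matrix (Fin n) (Fin n) ℝ)) i j = 1 / (n : ℝ))
    ∧ (∀ j, ∑ i, ((1 / (n : ℝ)) • (1 : Matrix (Fin n) (Fin n) ℝ)) i j = 1 / (n : ℝ))
    ∧ ∑ i, ∑ j, (∑ r, (X r i - (U * Uᵀ * X) r j) ^ 2)
          * ((1 / (n : ℝ)) • (1 : Matrix (Fin n) (Fin n) ℝ)) i j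
        = (1 / (n : ℝ)) * ∑ i, ∑ r, (X r i - (U * Uᵀ * X) r i) ^ 2 := by
  refine ⟨?_, ?_, ?_, ?_, ?_⟩
  · intro Pl hpos hrow hcol
    have step1 : ∑ i, ∑ j, (∑ r, (X r i - (U * Uᵀ * X) r i) ^ 2) * Pl i j
        ≤ ∑ i, ∑ j, (∑ r, (X r i - (U * Uᵀ * X) r j) ^ 2) * Pl i j := by
      apply Finset.sum_le_sum; intro i _
      apply Finset.sum_le_sum; intro j _
      exact mul_le_mul_of_nonneg_right (key_aux X U hU i j) (hpos i j)
    have step2 : ∑ i, ∑ j, (∑ r, (X r i - (U * Uᵀ * X) r i) ^ 2) * Pl i j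
        = (1 / (n : ℝ)) * ∑ i, ∑ r, (X r i - (U * Uᵀ * X) r i) ^ 2 := by
      rw [Finset.mul_sum]
      apply Finset.sum_congr rfl
      intro i _
      rw [← Finset.mul_sum, hrow i]; ring
    rw [ge_iff_le, ← step2]; exact step1
  · intro i j
    simp only [Matrix.smul_apply, Matrix.one_apply, smul_eq_mul]
    positivity
  · intro i
    simp [Matrix.smul_apply, Matrix.one_apply]
  · intro j
    simp [Matrix.smul_apply, Matrix.one_apply, eq_comm]
  · rw [Finset.mul_sum]
    apply Finset.sum_congr rfl
    intro i _
    rw [Finset.sum_eq_single i]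
    · simp only [Matrix.smul_apply, Matrix.one_apply_eq, smul_eq_mul, mul_one]
      ring
    · intro j _ hj
      have h0 : (1 : Matrix (Fin n) (Fin n) ℝ) i j = 0 :=
        Matrix.one_apply_ne fun h => hj h.symm
      simp [h0]
    · intro h; exact absurd (Finset.mem_univ i) h
end

section
/- (Descent property of one majorization–minimization step) Let P ∈ ℝ^{d×d} be symmetric negative semidefinite, and let U₀, U₁ ∈ St(d,k) be such that tr(U₁ᵀ (−P) U₀) ≥ tr(Uᵀ (−P) U₀) for every U ∈ St(d,k) (i.e., U₁ maximizes the linearization over the Stiefel manifold). Then tr(U₁ᵀ P U₁) ≤ tr(U₀ᵀ P U₀); i.e., the MM update does not increase the objective U ↦ tr(Uᵀ P U). -/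
open Matrix BigOperators Finset

lemma aux_trace_nonneg {d k : ℕ} (P : Matrix (Fin d) (Fin d) ℝ)
    (hPneg : ∀ v : Fin d → ℝ, v ⬝ᵥ (P *ᵥ v) ≤ 0)
    (M : Matrix (Fin d) (Fin k) ℝ) :
    0 ≤ Matrix.trace (Mᵀ * (-P) * M) := by
  rw [Matrix.trace]
  apply Finset.sum_nonneg
  intro j _
  have h := hPneg (fun i => M i j)
  simp only [Matrix.mulVec, dotProduct] at h
  have heq : (Mᵀ * (-P) * M).diag j
      = -∑ i, M i j * ∑ i', P i i' * M i' j := by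
    simp [Matrix.diag_apply, Matrix.mul_apply, Finset.mul_sum, Finset.sum_neg_distrib]
    simp only [Finset.sum_mul]
    rw [Finset.sum_comm]
    exact Finset.sum_congr rfl fun _ _ => Finset.sum_congr rfl fun _ _ => by ring
  rw [heq]
  linarith

/-- descent property of one MM step: if `P` is symmetric
negative semidefinite and `U₁ ∈ St(d,k)` maximizes `U ↦ tr(Uᵀ (−P) U₀)` over
`St(d,k)`, then `tr(U₁ᵀ P U₁) ≤ tr(U₀ᵀ P U₀)`. -/
theorem stmt17 (d k : ℕ)
    (P : Matrix (Fin d) (Fin d) ℝ) (hPsym : Pᵀ = P)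
    (hPneg : ∀ v : Fin d → ℝ, v ⬝ᵥ (P *ᵥ v) ≤ 0)
    (U₀ U₁ : Matrix (Fin d) (Fin k) ℝ)
    (hU₀ : U₀ᵀ * U₀ = 1) (hU₁ : U₁ᵀ * U₁ = 1)
    (hmax : ∀ U : Matrix (Fin d) (Fin k) ℝ, Uᵀ * U = 1 →
        Matrix.trace (Uᵀ * (-P) * U₀) ≤ Matrix.trace (U₁ᵀ * (-P) * U₀)) :
    Matrix.trace (U₁ᵀ * P * U₁) ≤ Matrix.trace (U₀ᵀ * P * U₀) := by
  have key := aux_trace_nonneg P hPneg (U₁ - U₀)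
  have hmax0 := hmax U₀ hU₀
  have hsymtr : Matrix.trace (U₀ᵀ * P * U₁) = Matrix.trace (U₁ᵀ * P * U₀) := by
    rw [← Matrix.trace_transpose (U₀ᵀ * P * U₁)]
    congr 1
    simp [Matrix.transpose_mul, Matrix.mul_assoc, hPsym]
  have expand : Matrix.trace ((U₁ - U₀)ᵀ * (-P) * (U₁ - U₀))
      = Matrix.trace (U₁ᵀ * (-P) * U₁) + Matrix.trace (U₀ᵀ * (-P) * U₀)
        - 2 * Matrix.trace (U₁ᵀ * (-P) * U₀) := by
    simp [Matrix.transpose_sub, Matrix.sub_mul, Matrix.mul_sub, Matrix.trace_sub, hsymtr]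
    ring
  have htr : Matrix.trace (U₁ᵀ * (-P) * U₁) = -Matrix.trace (U₁ᵀ * P * U₁) := by
    simp [Matrix.mul_neg, Matrix.neg_mul]
  have htr0 : Matrix.trace (U₀ᵀ * (-P) * U₀) = -Matrix.trace (U₀ᵀ * P * U₀) := by
    simp [Matrix.mul_neg, Matrix.neg_mul]
  rw [expand, htr, htr0] at key
  rw [htr0] at hmax0
  linarith
end
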